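/- The multinomial NML regret is nondecreasing in the sample size: for all integers L ≥ 1 and n ≥ 0, R(L, n) ≤ R(L, n + 1). -/

import Mathlib

open Finset

/-- The multinomial NML regret `R(L, n)`: the sum over all count vectors
`(h_1, …, h_L)` with `h_1 + ⋯ + h_L = n` of the maximum likelihood
`(n! / (h_1! ⋯ h_L!)) · ∏_v (h_v / n)^{h_v}` (with the convention `0^0 = 1`). -/
noncomputable def regret (L n : ℕ) : ℝ :=
  ∑ h ∈ Finset.Nat.antidiagonalTuple L n,
    (Nat.multinomial Finset.univ h : ℝ) * ∏ v, ((h v : ℝ) / (n : ℝ)) ^ (h v)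

/-- Maximum-likelihood inequality: among all subprobability vectors `θ`,
the product `∏ θ_v ^ g_v` is maximized at `θ_v = g_v / m`. -/
lemma ml_ineq {L m : ℕ} (hm : m ≠ 0) (g : Fin L → ℕ) (hg : ∑ v, g v = m)
    (θ : Fin L → ℝ) (hθ : ∀ v, 0 ≤ θ v) (hθs : ∑ v, θ v ≤ 1) :
    ∏ v, θ v ^ g v ≤ ∏ v, ((g v : ℝ) / m) ^ g v := by
  classical
  have hm' : (0 : ℝ) < m := by exact_mod_cast Nat.pos_of_ne_zero hm
  set S : Finset (Fin L) := Finset.univ.filter fun v => g v ≠ 0 with hSdef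
  have hmem : ∀ v ∈ S, g v ≠ 0 := fun v hv => (Finset.mem_filter.mp hv).2
  have hout : ∀ v ∈ (Finset.univ : Finset (Fin L)), v ∉ S → g v = 0 := by
    intro v _ hv
    by_contra hgv
    exact hv (Finset.mem_filter.mpr ⟨Finset.mem_univ v, hgv⟩)
  have hθS : ∏ v, θ v ^ g v = ∏ v ∈ S, θ v ^ g v :=
    (Finset.prod_subset (Finset.subset_univ S) (by
      intro v hv hvS; rw [hout v hv hvS, pow_zero])).symm
  have hgmS : ∏ v, ((g v : ℝ) / m) ^ g v = ∏ v ∈ S, ((g v : ℝ) / m) ^ g v :=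
    (Finset.prod_subset (Finset.subset_univ S) (by
      intro v hv hvS; rw [hout v hv hvS, pow_zero])).symm
  have hgS : ∑ v ∈ S, g v = m := by
    rw [← hg]
    exact Finset.sum_subset (Finset.subset_univ S) (fun v hv hvS => hout v hv hvS)
  set w : Fin L → ℝ := fun v => (g v : ℝ) / m with hwdef
  set z : Fin L → ℝ := fun v => θ v * ((m : ℝ) / g v) with hzdef
  have hw : ∀ v ∈ S, 0 ≤ w v := fun v _ => by positivity
  have hw' : ∑ v ∈ S, w v = 1 := by
    have : ∑ v ∈ S, (g v : ℝ) = m := by exact_mod_cast congrArg Nat.cast hgS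
    simp only [hwdef, ← Finset.sum_div, this, div_self hm'.ne']
  have hz : ∀ v ∈ S, 0 ≤ z v := by
    intro v hv
    have : (0:ℝ) ≤ (m : ℝ) / g v := by positivity
    exact mul_nonneg (hθ v) this
  have key := Real.geom_mean_le_arith_mean_weighted S w z hw hw' hz
  have h1 : ∑ v ∈ S, w v * z v ≤ 1 := by
    have heq : ∀ v ∈ S, w v * z v = θ v := by
      intro v hv
      have hgv : (g v : ℝ) ≠ 0 := Nat.cast_ne_zero.mpr (hmem v hv)
      simp only [hwdef, hzdef]
      field_simp
    rw [Finset.sum_congr rfl heq]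
    calc ∑ v ∈ S, θ v ≤ ∑ v, θ v :=
          Finset.sum_le_sum_of_subset_of_nonneg (Finset.subset_univ S)
            (fun v _ _ => hθ v)
      _ ≤ 1 := hθs
  -- rewrite the geometric mean as a power of ∏ z ^ g
  have h2 : ∏ v ∈ S, z v ^ w v = (∏ v ∈ S, z v ^ g v) ^ ((m : ℝ)⁻¹) := by
    rw [← Real.finset_prod_rpow S (fun v => z v ^ g v)
      (fun v hv => pow_nonneg (hz v hv) _) ((m:ℝ)⁻¹)]
    refine Finset.prod_congr rfl fun v hv => ?_
    show z v ^ ((g v : ℝ) / m) = (z v ^ g v) ^ ((m:ℝ)⁻¹)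
    rw [div_eq_mul_inv, Real.rpow_natCast_mul (hz v hv)]
  have hX : (0:ℝ) ≤ ∏ v ∈ S, z v ^ g v :=
    Finset.prod_nonneg fun v hv => pow_nonneg (hz v hv) _
  have h3 : ∏ v ∈ S, z v ^ g v ≤ 1 := by
    have h4 : (∏ v ∈ S, z v ^ g v) ^ ((m:ℝ)⁻¹) ≤ 1 := h2 ▸ (key.trans h1)
    have h5 := Real.rpow_inv_natCast_pow hX hm
    calc ∏ v ∈ S, z v ^ g v = ((∏ v ∈ S, z v ^ g v) ^ ((m:ℝ)⁻¹)) ^ m := h5.symm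
      _ ≤ 1 := pow_le_one₀ (Real.rpow_nonneg hX _) h4
  -- unfold z
  have h6 : ∏ v ∈ S, z v ^ g v =
      (∏ v ∈ S, θ v ^ g v) * ∏ v ∈ S, ((m : ℝ) / g v) ^ g v := by
    rw [← Finset.prod_mul_distrib]
    exact Finset.prod_congr rfl fun v hv => by rw [hzdef, mul_pow]
  have hA : (0:ℝ) < ∏ v ∈ S, ((g v : ℝ) / m) ^ g v := by
    refine Finset.prod_pos fun v hv => ?_
    have : (0:ℝ) < (g v : ℝ) := by
      exact_mod_cast Nat.pos_of_ne_zero (hmem v hv)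
    positivity
  have hAB : (∏ v ∈ S, ((m : ℝ) / g v) ^ g v) * ∏ v ∈ S, ((g v : ℝ) / m) ^ g v = 1 := by
    rw [← Finset.prod_mul_distrib]
    refine Finset.prod_eq_one fun v hv => ?_
    have hgv : (g v : ℝ) ≠ 0 := Nat.cast_ne_zero.mpr (hmem v hv)
    rw [← mul_pow, div_mul_div_comm, mul_comm (m:ℝ), div_self (by positivity), one_pow]
  rw [hθS, hgmS]
  calc ∏ v ∈ S, θ v ^ g v
      = (∏ v ∈ S, z v ^ g v) * ∏ v ∈ S, ((g v : ℝ) / m) ^ g v := by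
        rw [h6, mul_assoc, hAB, mul_one]
    _ ≤ 1 * ∏ v ∈ S, ((g v : ℝ) / m) ^ g v := by
        exact mul_le_mul_of_nonneg_right h3 hA.le
    _ = ∏ v ∈ S, ((g v : ℝ) / m) ^ g v := one_mul _

open Nat in
/-- Pascal-type recurrence for multinomial coefficients. -/
lemma multinomial_pascal {L : ℕ} (h : Fin L → ℕ) (v : Fin L) :
    (h v + 1) * Nat.multinomial Finset.univ (h + Pi.single v 1 : Fin L → ℕ) =
      (∑ w, h w + 1) * Nat.multinomial Finset.univ h := by
  classical
  have s1 := Nat.multinomial_spec Finset.univ (h + Pi.single v 1 : Fin L → ℕ)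
  have s2 := Nat.multinomial_spec Finset.univ h
  have hsum : ∑ w : Fin L, (h + Pi.single v 1 : Fin L → ℕ) w = ∑ w, h w + 1 := by
    simp [Pi.add_apply, Finset.sum_add_distrib, Finset.sum_pi_single']
  have hprod : ∏ w : Fin L, ((h + Pi.single v 1 : Fin L → ℕ) w)! = (h v + 1) * ∏ w, (h w)! := by
    rw [← Finset.mul_prod_erase Finset.univ _ (Finset.mem_univ v),
        ← Finset.mul_prod_erase Finset.univ (fun w => (h w)!) (Finset.mem_univ v)]
    have hrest : ∀ w ∈ Finset.univ.erase v, ((h + Pi.single v 1 : Fin L → ℕ) w)! = (h w)! := by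
      intro w hw
      have hwv : w ≠ v := Finset.ne_of_mem_erase hw
      simp [Pi.add_apply, Pi.single_eq_of_ne hwv]
    rw [Finset.prod_congr rfl hrest]
    simp only [Pi.add_apply, Pi.single_eq_same, Nat.factorial_succ]
    ring
  have P_pos : 0 < ∏ w, (h w)! := Finset.prod_pos fun _ _ => Nat.factorial_pos _
  apply Nat.eq_of_mul_eq_mul_left P_pos
  calc (∏ w, (h w)!) * ((h v + 1) * Nat.multinomial Finset.univ (h + Pi.single v 1 : Fin L → ℕ))
      = ((h v + 1) * ∏ w, (h w)!) * Nat.multinomial Finset.univ (h + Pi.single v 1 : Fin L → ℕ) := by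
        ring
    _ = (∏ w : Fin L, ((h + Pi.single v 1 : Fin L → ℕ) w)!) * Nat.multinomial Finset.univ (h + Pi.single v 1 : Fin L → ℕ) := by
        rw [hprod]
    _ = (∑ w : Fin L, (h + Pi.single v 1 : Fin L → ℕ) w)! := s1
    _ = (∑ w, h w + 1)! := by rw [hsum]
    _ = (∑ w, h w + 1) * (∑ w, h w)! := Nat.factorial_succ _
    _ = (∑ w, h w + 1) * ((∏ w, (h w)!) * Nat.multinomial Finset.univ h) := by rw [s2]
    _ = (∏ w, (h w)!) * ((∑ w, h w + 1) * Nat.multinomial Finset.univ h) := by ring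

open Nat in
/-- The multinomial NML regret is nondecreasing in the sample size:
`R(L, n) ≤ R(L, n + 1)` for all `L ≥ 1` and `n ≥ 0`. -/
theorem regret_mono (L : ℕ) (hL : 1 ≤ L) (n : ℕ) :
    regret L n ≤ regret L (n + 1) := by
  classical
  rcases Nat.eq_zero_or_pos n with rfl | hn
  · -- base case `n = 0`
    have h0 : regret L 0 = 1 := by
      rw [regret, Finset.Nat.antidiagonalTuple_zero_right]
      simp [Nat.multinomial]
    rw [h0, regret]
    set i : Fin L := ⟨0, hL⟩
    set g₀ : Fin L → ℕ := Pi.single i 1 with hg₀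
    have hmem : g₀ ∈ Finset.Nat.antidiagonalTuple L (0 + 1) := by
      rw [Finset.Nat.mem_antidiagonalTuple]
      simp [hg₀, Finset.sum_pi_single']
    have hmult : Nat.multinomial Finset.univ g₀ = 1 := by
      have hspec := Nat.multinomial_spec Finset.univ g₀
      have h1 : ∏ w : Fin L, (g₀ w)! = 1 := by
        refine Finset.prod_eq_one fun w _ => ?_
        rcases eq_or_ne w i with rfl | hwi
        · simp [hg₀]
        · simp [hg₀, Pi.single_eq_of_ne hwi]
      have h2 : ∑ w : Fin L, g₀ w = 1 := by simp [hg₀, Finset.sum_pi_single']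
      rw [h1, h2] at hspec
      simpa using hspec
    have hterm : (Nat.multinomial Finset.univ g₀ : ℝ) *
        ∏ v, ((g₀ v : ℝ) / ((0 + 1 : ℕ) : ℝ)) ^ (g₀ v) = 1 := by
      rw [hmult]
      have : ∏ v, ((g₀ v : ℝ) / ((0 + 1 : ℕ) : ℝ)) ^ (g₀ v) = 1 := by
        refine Finset.prod_eq_one fun w _ => ?_
        rcases eq_or_ne w i with rfl | hwi
        · simp [hg₀]
        · simp [hg₀, Pi.single_eq_of_ne hwi]
      rw [this]; norm_num
    calc (1:ℝ) = (Nat.multinomial Finset.univ g₀ : ℝ) *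
          ∏ v, ((g₀ v : ℝ) / ((0 + 1 : ℕ) : ℝ)) ^ (g₀ v) := hterm.symm
      _ ≤ _ := Finset.single_le_sum (f := fun g => (Nat.multinomial Finset.univ g : ℝ) *
            ∏ v, ((g v : ℝ) / ((0 + 1 : ℕ) : ℝ)) ^ (g v))
          (fun g _ => by positivity) hmem
  · -- main case `n ≥ 1`
    have hn' : (0:ℝ) < n := by exact_mod_cast hn
    set A := Finset.Nat.antidiagonalTuple L n ×ˢ (Finset.univ : Finset (Fin L)) with hA
    set B := Finset.Nat.antidiagonalTuple L (n + 1) ×ˢ (Finset.univ : Finset (Fin L)) with hB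
    set T : (Fin L → ℕ) × Fin L → ℝ := fun p =>
      ((p.1 p.2 : ℝ) / ((n:ℝ) + 1)) * ((Nat.multinomial Finset.univ p.1 : ℝ) *
        ∏ w, ((p.1 w : ℝ) / ((n:ℝ) + 1)) ^ (p.1 w)) with hT
    have hTnonneg : ∀ p, 0 ≤ T p := by
      intro p
      have : (0:ℝ) ≤ (n:ℝ) + 1 := by positivity
      refine mul_nonneg (by positivity) (mul_nonneg (by positivity) ?_)
      exact Finset.prod_nonneg fun w _ => by positivity
    -- Step 1: rewrite `regret L (n+1)` as a sum over pairs
    have step1 : regret L (n + 1) = ∑ p ∈ B, T p := by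
      rw [hB, Finset.sum_product, regret]
      refine Finset.sum_congr rfl fun g hg => ?_
      have hgsum : ∑ v, g v = n + 1 := Finset.Nat.mem_antidiagonalTuple.mp hg
      have hc : (∑ v, (g v : ℝ)) = (n:ℝ) + 1 := by exact_mod_cast congrArg Nat.cast hgsum
      have : ∑ v : Fin L, T (g, v) =
          ((∑ v, (g v : ℝ)) / ((n:ℝ) + 1)) * ((Nat.multinomial Finset.univ g : ℝ) *
            ∏ w, ((g w : ℝ) / ((n:ℝ) + 1)) ^ (g w)) := by
        simp only [hT]
        rw [← Finset.sum_mul, ← Finset.sum_div]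
      rw [this, hc, div_self (by positivity), one_mul]
      push_cast
      rfl
    -- the shift map
    set phi : (Fin L → ℕ) × Fin L → (Fin L → ℕ) × Fin L :=
      fun p => (p.1 + Pi.single p.2 1, p.2) with hphi
    have hinj : ∀ x ∈ A, ∀ y ∈ A, phi x = phi y → x = y := by
      intro x _ y _ hxy
      simp only [hphi, Prod.mk.injEq] at hxy
      obtain ⟨h1, h2⟩ := hxy
      rw [h2] at h1
      exact Prod.ext (add_right_cancel h1) h2
    have himg : A.image phi ⊆ B := by
      intro q hq
      obtain ⟨p, hp, rfl⟩ := Finset.mem_image.mp hq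
      obtain ⟨hp1, -⟩ := Finset.mem_product.mp hp
      refine Finset.mem_product.mpr ⟨?_, Finset.mem_univ _⟩
      rw [Finset.Nat.mem_antidiagonalTuple] at hp1 ⊢
      simp [hphi, Pi.add_apply, Finset.sum_add_distrib, Finset.sum_pi_single', hp1]
    have step3 : ∑ p ∈ A, T (phi p) ≤ ∑ p ∈ B, T p := by
      rw [← Finset.sum_image hinj]
      exact Finset.sum_le_sum_of_subset_of_nonneg himg fun q _ _ => hTnonneg q
    -- Step 4 : pointwise lower bound
    have step4 : ∀ p ∈ A, (Nat.multinomial Finset.univ p.1 : ℝ) *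
        (∏ w, ((p.1 w : ℝ) / (n:ℝ)) ^ (p.1 w)) * ((p.1 p.2 : ℝ) / (n:ℝ)) ≤ T (phi p) := by
      rintro ⟨h, v⟩ hp
      obtain ⟨hp1, -⟩ := Finset.mem_product.mp hp
      have hhsum : ∑ w, h w = n := Finset.Nat.mem_antidiagonalTuple.mp hp1
      set g : Fin L → ℕ := h + Pi.single v 1 with hg
      have hgv : g v = h v + 1 := by simp [hg]
      have hgsum : ∑ w, g w = n + 1 := by
        simp [hg, Pi.add_apply, Finset.sum_add_distrib, Finset.sum_pi_single', hhsum]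
      -- Pascal identity in ℝ
      have pascal : ((h v : ℝ) + 1) * (Nat.multinomial Finset.univ g : ℝ) =
          ((n:ℝ) + 1) * (Nat.multinomial Finset.univ h : ℝ) := by
        have hnat := multinomial_pascal h v
        rw [hhsum] at hnat
        rw [hg]
        exact_mod_cast congrArg (Nat.cast : ℕ → ℝ) hnat
      -- maximum likelihood inequality
      have ml : ∏ w, ((h w : ℝ) / (n:ℝ)) ^ (g w) ≤
          ∏ w, ((g w : ℝ) / ((n+1 : ℕ) : ℝ)) ^ (g w) := by
        refine ml_ineq (Nat.succ_ne_zero n) g hgsum _ (fun w => by positivity) ?_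
        rw [← Finset.sum_div]
        have : (∑ w, (h w : ℝ)) = (n:ℝ) := by exact_mod_cast congrArg Nat.cast hhsum
        rw [this, div_self hn'.ne']
      have split : ∏ w, ((h w : ℝ) / (n:ℝ)) ^ (g w) =
          (∏ w, ((h w : ℝ) / (n:ℝ)) ^ (h w)) * ((h v : ℝ) / (n:ℝ)) := by
        have e1 : ∀ w : Fin L, ((h w : ℝ) / (n:ℝ)) ^ (g w) =
            ((h w : ℝ) / (n:ℝ)) ^ (h w) * ((h w : ℝ) / (n:ℝ)) ^ ((Pi.single v 1 : Fin L → ℕ) w) := by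
          intro w; rw [hg]; rw [Pi.add_apply, pow_add]
        rw [Finset.prod_congr rfl fun w _ => e1 w, Finset.prod_mul_distrib]
        congr 1
        rw [Finset.prod_eq_single v (fun w _ hw => by simp [Pi.single_eq_of_ne hw])
          (fun hv => absurd (Finset.mem_univ v) hv)]
        simp
      -- assemble
      have hTval : T (phi (h, v)) = (((h v : ℝ) + 1) / ((n:ℝ) + 1)) *
          ((Nat.multinomial Finset.univ g : ℝ) *
            ∏ w, ((g w : ℝ) / ((n:ℝ) + 1)) ^ (g w)) := by
        simp only [hT, hphi]
        rw [show ((h + Pi.single v 1 : Fin L → ℕ) v) = h v + 1 from by simp]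
        rw [hg]
        push_cast
        ring
      rw [hTval]
      have key : (Nat.multinomial Finset.univ h : ℝ) *
          (∏ w, ((h w : ℝ) / (n:ℝ)) ^ (g w)) ≤
          (((h v : ℝ) + 1) / ((n:ℝ) + 1)) * ((Nat.multinomial Finset.univ g : ℝ) *
            ∏ w, ((g w : ℝ) / ((n:ℝ) + 1)) ^ (g w)) := by
        have hml' : ∏ w, ((h w : ℝ) / (n:ℝ)) ^ (g w) ≤
            ∏ w, ((g w : ℝ) / ((n:ℝ) + 1)) ^ (g w) := by
          have : (((n+1 : ℕ)) : ℝ) = (n:ℝ) + 1 := by push_cast; ring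
          rw [← this]; exact ml
        have hM : (0:ℝ) ≤ (Nat.multinomial Finset.univ h : ℝ) := by positivity
        calc (Nat.multinomial Finset.univ h : ℝ) * (∏ w, ((h w : ℝ) / (n:ℝ)) ^ (g w))
            ≤ (Nat.multinomial Finset.univ h : ℝ) *
              ∏ w, ((g w : ℝ) / ((n:ℝ) + 1)) ^ (g w) :=
              mul_le_mul_of_nonneg_left hml' hM
          _ = (((h v : ℝ) + 1) / ((n:ℝ) + 1)) * ((Nat.multinomial Finset.univ g : ℝ) *
                ∏ w, ((g w : ℝ) / ((n:ℝ) + 1)) ^ (g w)) := by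
              rw [div_mul_eq_mul_div, eq_div_iff (by positivity : ((n:ℝ) + 1) ≠ 0)]
              linear_combination (-(∏ w, ((g w : ℝ) / ((n:ℝ) + 1)) ^ g w)) * pascal
      calc (Nat.multinomial Finset.univ h : ℝ) *
            (∏ w, ((h w : ℝ) / (n:ℝ)) ^ (h w)) * ((h v : ℝ) / (n:ℝ))
          = (Nat.multinomial Finset.univ h : ℝ) * (∏ w, ((h w : ℝ) / (n:ℝ)) ^ (g w)) := by
            rw [split]; ring
        _ ≤ _ := key
    -- Step 5 : the lower bounds sum to `regret L n`
    have step5 : ∑ p ∈ A, ((Nat.multinomial Finset.univ p.1 : ℝ) *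
        (∏ w, ((p.1 w : ℝ) / (n:ℝ)) ^ (p.1 w)) * ((p.1 p.2 : ℝ) / (n:ℝ))) = regret L n := by
      rw [hA, Finset.sum_product, regret]
      refine Finset.sum_congr rfl fun h hh => ?_
      have hhsum : ∑ w, h w = n := Finset.Nat.mem_antidiagonalTuple.mp hh
      have hc : (∑ w, (h w : ℝ)) = (n:ℝ) := by exact_mod_cast congrArg Nat.cast hhsum
      dsimp only
      rw [← Finset.mul_sum, ← Finset.sum_div, hc, div_self hn'.ne', mul_one]
    calc regret L n = ∑ p ∈ A, ((Nat.multinomial Finset.univ p.1 : ℝ) *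
          (∏ w, ((p.1 w : ℝ) / (n:ℝ)) ^ (p.1 w)) * ((p.1 p.2 : ℝ) / (n:ℝ))) := step5.symm
      _ ≤ ∑ p ∈ A, T (phi p) := Finset.sum_le_sum step4
      _ ≤ ∑ p ∈ B, T p := step3
      _ = regret L (n + 1) := step1.symm
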